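/- Let c ≥ 2 and let g, h : ℝ^d → ℝ^c have componentwise values in [0,1]. Fix x ∈ ℝ^d, a norm ‖·‖ on ℝ^d, ε > 0, α ∈ [1/2, 1], and let y satisfy h_y(x) ≥ h_i(x) for all i. Suppose there are local Lipschitz-type constants L_1^x, …, L_c^x > 0 such that for all δ with ‖δ‖ ≤ ε: h_y(x) − h_y(x+δ) ≤ ε·L_y^x and h_i(x+δ) − h_i(x) ≤ ε·L_i^x for all i ≠ y. If min_{i≠y} (α·(h_y(x) − h_i(x)) + α − 1)/(α·(L_y^x + L_i^x)) ≥ ε, then for every δ with ‖δ‖ ≤ ε and every i, it holds that (1−α)·g_y(x+δ) + α·h_y(x+δ) ≥ (1−α)·g_i(x+δ) + α·h_i(x+δ); i.e., the mixed classifier h^α predicts class y throughout the ball of radius ε around x. -/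
import Mathlib


/-- **Local-Lipschitz version of the certified-radius theorem.**
If `h` satisfies local Lipschitz-type bounds with constants `L_i^x > 0` on the norm ball of
radius `ε` around `x`, and the local certified radius
`min_{i ≠ y} (α (h_y(x) - h_i(x)) + α - 1) / (α (L_y^x + L_i^x))` is at least `ε`,
then the mixed classifier predicts class `y = argmax_i h_i(x)` throughout the ball of
radius `ε` around `x`. -/
theorem mixed_classifier_local_lipschitz_certified
    {d c : ℕ} (hc : 2 ≤ c)
    (N : (Fin d → ℝ) → ℝ)                      -- a fixed norm on ℝ^d
    (g h : (Fin d → ℝ) → Fin c → ℝ)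
    (hg : ∀ x i, g x i ∈ Set.Icc (0 : ℝ) 1)
    (hh : ∀ x i, h x i ∈ Set.Icc (0 : ℝ) 1)
    (x : Fin d → ℝ) (ε : ℝ) (hε : 0 < ε)
    (α : ℝ) (hα : α ∈ Set.Icc (1 / 2 : ℝ) 1)
    (y : Fin c) (hy : ∀ i, h x i ≤ h x y)
    (Lx : Fin c → ℝ) (hLx : ∀ i, 0 < Lx i)
    (hlocal_y : ∀ δ : Fin d → ℝ, N δ ≤ ε → h x y - h (x + δ) y ≤ ε * Lx y)
    (hlocal_i : ∀ i, i ≠ y → ∀ δ : Fin d → ℝ, N δ ≤ ε →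
      h (x + δ) i - h x i ≤ ε * Lx i)
    (hrad : ε ≤ (Finset.univ.filter (fun i : Fin c => i ≠ y)).inf'
        (by
          obtain ⟨i, hi⟩ := Fintype.exists_ne_of_one_lt_card
            (by simpa using lt_of_lt_of_le one_lt_two hc) y
          exact ⟨i, by simp [hi]⟩)
        (fun i => (α * (h x y - h x i) + α - 1) / (α * (Lx y + Lx i)))) :
    ∀ δ : Fin d → ℝ, N δ ≤ ε → ∀ i : Fin c,
      (1 - α) * g (x + δ) i + α * h (x + δ) i ≤
        (1 - α) * g (x + δ) y + α * h (x + δ) y := by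
  intro δ hδ i
  by_cases hiy : i = y
  · subst hiy; rfl
  · have hα0 : (0:ℝ) < α := lt_of_lt_of_le (by norm_num) hα.1
    have hL : 0 < α * (Lx y + Lx i) := mul_pos hα0 (add_pos (hLx y) (hLx i))
    have hmem : i ∈ Finset.univ.filter (fun j : Fin c => j ≠ y) := by simp [hiy]
    have h1 : ε ≤ (α * (h x y - h x i) + α - 1) / (α * (Lx y + Lx i)) :=
      le_trans hrad (Finset.inf'_le _ hmem)
    have h2 : ε * (α * (Lx y + Lx i)) ≤ α * (h x y - h x i) + α - 1 :=
      (le_div_iff₀ hL).mp h1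
    have h3 := hlocal_y δ hδ
    have h4 := hlocal_i i hiy δ hδ
    have hgi := (hg (x + δ) i).2
    have hgy := (hg (x + δ) y).1
    nlinarith [mul_le_mul_of_nonneg_left h3 hα0.le, mul_le_mul_of_nonneg_left h4 hα0.le,
      mul_le_mul_of_nonneg_left hgi (sub_nonneg.2 hα.2),
      mul_nonneg (sub_nonneg.2 hα.2) hgy]
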